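/- Let q_1, ..., q_l be distinct odd primes, e_1, ..., e_l positive integers, and r a nonnegative integer such that S_{q_i^{e_i} - 1} \equiv r \pmod{q_i^{e_i}} for all i = 1, ..., l. Then for n = q_1^{e_1} q_2^{e_2} \cdots q_l^{e_l} one has S_{n-1} \equiv r \pmod{n}. -/
import Mathlib

open Finset

lemma asc_cast (N a b j : ℕ) (h : (a : ZMod N) = b) :
    ((a.ascFactorial j : ℕ) : ZMod N) = ((b.ascFactorial j : ℕ) : ZMod N) := by
  induction j with
  | zero => simp [Nat.ascFactorial_zero]
  | succ k ih =>
      rw [Nat.ascFactorial_succ, Nat.ascFactorial_succ]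
      push_cast
      rw [h, ih]

lemma aux_sum (N n : ℕ) (hN : 0 < N) (hdvd : N ∣ n) (hodd : Odd n) :
    ((numDerangements (n - 1) : ℤ) : ZMod N)
      = ∑ j ∈ range N, (-1 : ZMod N) ^ j * ((N - j).ascFactorial j : ℕ) := by
  have hn1 : 1 ≤ n := hodd.pos
  have heven : Even (n - 1) := by
    rcases hodd with ⟨m, hm⟩; exact ⟨m, by omega⟩
  have h1 : ((numDerangements (n-1) : ℤ) : ZMod N)
      = ∑ k ∈ range n, (-1 : ZMod N) ^ k * ((k+1).ascFactorial (n-1-k) : ℕ) := by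
    rw [numDerangements_sum]
    have : n - 1 + 1 = n := by omega
    rw [this]
    push_cast
    apply Finset.sum_congr rfl
    intro x _
    rfl
  rw [h1, ← Finset.sum_range_reflect]
  have key : ∀ j ∈ range n,
      (-1 : ZMod N) ^ (n - 1 - j) * (((n - 1 - j + 1).ascFactorial (n - 1 - (n - 1 - j)) : ℕ) : ZMod N)
        = if j < N then (-1 : ZMod N) ^ j * ((N - j).ascFactorial j : ℕ) else 0 := by
    intro j hj
    rw [mem_range] at hj
    have h2 : n - 1 - (n - 1 - j) = j := by omega
    have h3 : n - 1 - j + 1 = n - j := by omega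
    rw [h2, h3]
    by_cases hjN : j < N
    · rw [if_pos hjN]
      congr 1
      · -- signs
        have hsub : n - 1 - j + j = n - 1 := by omega
        have h4 : (-1 : ZMod N) ^ (n - 1 - j) * (-1) ^ j = 1 := by
          rw [← pow_add, hsub, heven.neg_one_pow]
        have h5 : ((-1 : ZMod N) ^ j) * ((-1) ^ j) = 1 := by
          rw [← pow_add, Even.neg_one_pow ⟨j, rfl⟩]
        calc (-1 : ZMod N) ^ (n - 1 - j)
            = (-1 : ZMod N) ^ (n - 1 - j) * ((-1) ^ j * (-1) ^ j) := by rw [h5, mul_one]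
          _ = ((-1 : ZMod N) ^ (n - 1 - j) * (-1) ^ j) * (-1) ^ j := by ring
          _ = (-1) ^ j := by rw [h4, one_mul]
      · apply asc_cast
        have hNn : (n : ZMod N) = 0 := by
          exact_mod_cast (ZMod.natCast_eq_zero_iff n N).mpr hdvd
        have : j ≤ n := by omega
        rw [Nat.cast_sub this, Nat.cast_sub (le_of_lt hjN), hNn, ZMod.natCast_self]
    · rw [if_neg hjN]
      have : (((n - j).ascFactorial j : ℕ) : ZMod N) = 0 := by
        rw [ZMod.natCast_eq_zero_iff]
        exact dvd_trans (Nat.dvd_factorial hN (by omega)) (Nat.factorial_dvd_ascFactorial _ _)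
      rw [this, mul_zero]
  rw [Finset.sum_congr rfl key, ← Finset.sum_filter]
  congr 1
  have hle : N ≤ n := Nat.le_of_dvd (by omega) hdvd
  ext x
  simp only [mem_filter, mem_range]
  omega

lemma key_cong (N n : ℕ) (hN : 0 < N) (hdvd : N ∣ n) (hodd : Odd n) :
    (numDerangements (n-1) : ℤ) ≡ (numDerangements (N-1) : ℤ) [ZMOD (N : ℤ)] := by
  have hNodd : Odd N := by
    obtain ⟨t, rfl⟩ := hdvd
    exact (Nat.odd_mul.mp hodd).1
  have h : ((numDerangements (n-1) : ℤ) : ZMod N) = ((numDerangements (N-1) : ℤ) : ZMod N) := by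
    rw [aux_sum N n hN hdvd hodd, aux_sum N N hN dvd_rfl hNodd]
  exact (ZMod.intCast_eq_intCast_iff _ _ N).mp h

/-- If `q₁, …, q_l` are distinct odd primes, `e_i ≥ 1`, and `r ≥ 0` satisfies
`S_{q_i^{e_i}-1} ≡ r (mod q_i^{e_i})` for all `i`, then for
`n = ∏ q_i^{e_i}` we have `S_{n-1} ≡ r (mod n)`. -/
theorem derangement_crt_odd_prime_powers (l : ℕ) (q e : Fin l → ℕ) (r : ℕ)
    (hq : ∀ i, (q i).Prime) (hodd : ∀ i, Odd (q i)) (hinj : Function.Injective q)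
    (he : ∀ i, 0 < e i)
    (hcong : ∀ i, (numDerangements (q i ^ e i - 1) : ℤ) ≡ (r : ℤ) [ZMOD ((q i ^ e i : ℕ) : ℤ)]) :
    (numDerangements ((∏ i, q i ^ e i) - 1) : ℤ) ≡ (r : ℤ)
      [ZMOD ((∏ i, q i ^ e i : ℕ) : ℤ)] := by
  set n := ∏ i, q i ^ e i with hn
  have hoddn : Odd n :=
    Finset.prod_induction _ Odd (fun a b ha hb => ha.mul hb) odd_one
      (fun i _ => (hodd i).pow)
  have hi : ∀ i, (numDerangements (n - 1) : ℤ) ≡ (r : ℤ) [ZMOD ((q i ^ e i : ℕ) : ℤ)] := by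
    intro i
    exact (key_cong (q i ^ e i) n (pow_pos (hq i).pos _)
      (Finset.dvd_prod_of_mem _ (Finset.mem_univ i)) hoddn).trans (hcong i)
  rw [Int.modEq_iff_dvd]
  have hcast : ((n : ℕ) : ℤ) = ∏ i, ((q i ^ e i : ℕ) : ℤ) := by
    rw [hn]; push_cast; rfl
  rw [hcast]
  apply Finset.prod_dvd_of_coprime
  · intro i _ j _ hij
    exact Nat.isCoprime_iff_coprime.mpr
      (Nat.Coprime.pow _ _ ((Nat.coprime_primes (hq i) (hq j)).mpr
        (fun h => hij (hinj h))))
  · intro i _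
    exact Int.modEq_iff_dvd.mp (hi i)
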